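/- Let N ≥ 3 be odd, φ ∈ ℝ^N, and let θ be a stationary point of F_φ (with θ_N = 0) labelled by q_1,…,q_{N−1} ∈ {0,1}, i.e. s_k ≡ (−1)^{q_k} s_N + q_k π (mod 2π) for k = 1,…,N−1. Then the Hessian determinant at θ equals det 𝓗(θ) = (cos s_N)^{N−1} · (1 + Σ_{k=1}^{N−1} (−1)^{q_k}) · Π_{j=1}^{N−1} (−1)^{q_j}. -/
import Mathlib


open Real Filter

/-- The variable `s k = φ k + θ (k+1) - θ k` (indices cyclic mod `N`,
0-based; paper index `k` corresponds to `k-1` here, so `s_N` is `sVar` at `lastIdx`). -/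
noncomputable def sVar (N : ℕ) (hN : 0 < N) (φ θ : Fin N → ℝ) (k : Fin N) : ℝ :=
  φ k + θ ⟨((k : ℕ) + 1) % N, Nat.mod_lt _ hN⟩ - θ k

/-- The lattice Landau gauge functional / random phase XY Hamiltonian
`F_φ(θ) = Σ_k (1 - cos(φ_k + θ_{k+1} - θ_k))` with periodic boundary conditions. -/
noncomputable def Fxy (N : ℕ) (hN : 0 < N) (φ θ : Fin N → ℝ) : ℝ :=
  ∑ k : Fin N, (1 - Real.cos (sVar N hN φ θ k))

/-- The index of the fixed site (paper site `N`). -/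
def lastIdx (N : ℕ) (hN : 0 < N) : Fin N :=
  ⟨N - 1, Nat.sub_lt hN Nat.one_pos⟩

/-- `θ` is a stationary point of `F_φ` regarded as a function of the free
coordinates `θ_1, …, θ_{N-1}` (0-based: coordinates `k` with `k < N-1`),
with `θ` at `lastIdx` held fixed: all partial derivatives vanish. -/
noncomputable def IsStationaryPt (N : ℕ) (hN : 0 < N) (φ θ : Fin N → ℝ) : Prop :=
  ∀ k : Fin N, (k : ℕ) < N - 1 →
    deriv (fun t : ℝ => Fxy N hN φ (Function.update θ k t)) (θ k) = 0

/-- The `(N-1) × (N-1)` tridiagonal matrix with entries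
`δ_{ij}(c_{i-1} + c_i) - δ_{i-1,j} c_{i-1} - δ_{i+1,j} c_i`, where indices are
0-based (paper index `i` ↦ `i-1`) and `c_0 := c_N` (cyclic predecessor). -/
noncomputable def hessC (N : ℕ) (hN : 0 < N) (c : Fin N → ℝ) :
    Matrix (Fin (N - 1)) (Fin (N - 1)) ℝ :=
  Matrix.of fun i j =>
    (if i = j then
        c ⟨((i : ℕ) + (N - 1)) % N, Nat.mod_lt _ hN⟩ +
          c ⟨(i : ℕ), lt_of_lt_of_le i.isLt (Nat.sub_le N 1)⟩
      else 0)
    - (if (i : ℕ) = (j : ℕ) + 1 then c ⟨((i : ℕ) + (N - 1)) % N, Nat.mod_lt _ hN⟩ else 0)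
    - (if (j : ℕ) = (i : ℕ) + 1 then c ⟨(i : ℕ), lt_of_lt_of_le i.isLt (Nat.sub_le N 1)⟩ else 0)

/-- The Hessian of `F_φ` (with the last coordinate fixed) at a configuration `θ`. -/
noncomputable def hessAt (N : ℕ) (hN : 0 < N) (φ θ : Fin N → ℝ) :
    Matrix (Fin (N - 1)) (Fin (N - 1)) ℝ :=
  hessC N hN fun k => Real.cos (sVar N hN φ θ k)

/-- `F_φ` as a function of the free coordinates only: the coordinate at
`lastIdx` is overwritten by `0`. -/
noncomputable def FxyFixed (N : ℕ) (hN : 0 < N) (φ : Fin N → ℝ) (η : Fin N → ℝ) : ℝ :=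
  Fxy N hN φ (Function.update η (lastIdx N hN) 0)

/-- The value `σ = (Φ + 2πl - π Σ_{k=1}^{N-1} q_k) / (1 + Σ_{k=1}^{N-1} (-1)^{q_k})`. -/
noncomputable def sigmaVal (N : ℕ) (hN : 0 < N) (φ : Fin N → ℝ) (q : Fin N → ℕ) (l : ℤ) : ℝ :=
  ((∑ k, φ k) + 2 * Real.pi * (l : ℝ)
      - Real.pi * ∑ k ∈ Finset.univ.erase (lastIdx N hN), (q k : ℝ)) /
    (1 + ∑ k ∈ Finset.univ.erase (lastIdx N hN), (-1 : ℝ) ^ (q k))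


open Finset in
private noncomputable def triA (n : ℕ) (u : ℕ → ℝ) : Matrix (Fin n) (Fin n) ℝ :=
  Matrix.of fun i j =>
    if (i:ℕ) = j then u i + u (i+1)
    else if (j:ℕ) = (i:ℕ) + 1 then -u ((i:ℕ)+1)
    else if (i:ℕ) = (j:ℕ) + 1 then -u i
    else 0

open Finset in
private noncomputable def Ssum (n : ℕ) (u : ℕ → ℝ) : ℝ :=
  ∑ k ∈ range (n+1), ∏ j ∈ range (n+1), (if j = k then 1 else u j)

open Finset in
private lemma Ssum_peel (n : ℕ) (u : ℕ → ℝ) :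
    Ssum (n+1) u = u 0 * Ssum n (fun i => u (i+1)) + ∏ j ∈ range (n+1), u (j+1) := by
  unfold Ssum
  rw [Finset.sum_range_succ']
  have h0 : (∏ j ∈ range (n+2), if j = 0 then (1:ℝ) else u j) = ∏ j ∈ range (n+1), u (j+1) := by
    rw [Finset.prod_range_succ']
    simp
  rw [h0]
  congr 1
  rw [Finset.mul_sum]
  refine Finset.sum_congr rfl fun k _ => ?_
  rw [Finset.prod_range_succ']
  simp [mul_comm]

private lemma sub1 (n : ℕ) (u : ℕ → ℝ) :
    (triA (n+2) u).submatrix Fin.succ ((0 : Fin (n+2)).succAbove) =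
      triA (n+1) (fun i => u (i+1)) := by
  ext i j
  simp only [Matrix.submatrix_apply, Fin.succAbove_zero, triA, Matrix.of_apply,
    Fin.val_succ]
  split_ifs <;> first | rfl | omega

private lemma hval1 (n : ℕ) (j : Fin (n+1)) :
    (((Fin.succ (0:Fin (n+1)) : Fin (n+2))).succAbove j : ℕ)
      = if (j:ℕ) < 1 then (j:ℕ) else (j:ℕ)+1 := by
  simp [Fin.succAbove, Fin.lt_def]
  split_ifs <;> simp_all

open Finset in
private lemma triA_det : ∀ (n : ℕ) (u : ℕ → ℝ), (triA n u).det = Ssum n u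
  | 0, u => by
    simp [Matrix.det_fin_zero, Ssum]
  | 1, u => by
    rw [Matrix.det_fin_one]
    simp [triA, Ssum, Finset.sum_range_succ, Finset.prod_range_succ]
    ring
  | (n+2), u => by
    have h1 := triA_det (n+1) (fun i => u (i+1))
    have h0 := triA_det n (fun i => u (i+1+1))
    rw [Matrix.det_succ_row_zero, Fin.sum_univ_succ, Fin.sum_univ_succ]
    have hz : ∀ j : Fin n, ((-1:ℝ)) ^ ((j.succ.succ : Fin (n+2)) : ℕ) *
        triA (n+2) u 0 j.succ.succ *
        ((triA (n+2) u).submatrix Fin.succ j.succ.succ.succAbove).det = 0 := by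
      intro j
      have : triA (n+2) u 0 j.succ.succ = 0 := by
        simp [triA]
      simp [this]
    rw [Finset.sum_eq_zero fun j _ => hz j]
    have e00 : triA (n+2) u 0 0 = u 0 + u 1 := by simp [triA]
    have e01 : triA (n+2) u 0 (Fin.succ 0) = -u 1 := by simp [triA]
    have hB : ((triA (n+2) u).submatrix Fin.succ ((Fin.succ (0 : Fin (n+1)) : Fin (n+2))).succAbove).det
        = -u 1 * Ssum n (fun i => u (i+1+1)) := by
      rw [Matrix.det_succ_column_zero, Fin.sum_univ_succ]
      have hz2 : ∀ i : Fin n,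
          ((-1:ℝ)) ^ ((i.succ : Fin (n+1)) : ℕ) *
            (triA (n+2) u).submatrix Fin.succ ((Fin.succ (0 : Fin (n+1)) : Fin (n+2))).succAbove i.succ 0 *
            ((((triA (n+2) u).submatrix Fin.succ
              ((Fin.succ (0 : Fin (n+1)) : Fin (n+2))).succAbove)).submatrix i.succ.succAbove Fin.succ).det = 0 := by
        intro i
        have hent : (triA (n+2) u).submatrix Fin.succ
            ((Fin.succ (0 : Fin (n+1)) : Fin (n+2))).succAbove i.succ 0 = 0 := by
          simp only [Matrix.submatrix_apply, triA, Matrix.of_apply, Fin.val_succ]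
          rw [show ((((Fin.succ (0:Fin (n+1)) : Fin (n+2))).succAbove 0 : ℕ)) = 0 from by
            rw [hval1]; simp]
          split_ifs <;> first | rfl | omega | exact False.elim (by assumption)
        rw [hent]
        ring
      rw [Finset.sum_eq_zero fun i _ => hz2 i]
      have eB0 : (triA (n+2) u).submatrix Fin.succ
          ((Fin.succ (0 : Fin (n+1)) : Fin (n+2))).succAbove 0 0 = -u 1 := by
        simp only [Matrix.submatrix_apply, triA, Matrix.of_apply, Fin.val_succ, Fin.val_zero]
        rw [show ((((Fin.succ (0:Fin (n+1)) : Fin (n+2))).succAbove 0 : ℕ)) = 0 from by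
          rw [hval1]; simp]
        norm_num
      have sub2 : (((triA (n+2) u).submatrix Fin.succ
            ((Fin.succ (0 : Fin (n+1)) : Fin (n+2))).succAbove)).submatrix
            (Fin.succAbove 0) Fin.succ = triA n (fun i => u (i+1+1)) := by
        ext i j
        simp only [Matrix.submatrix_apply, Fin.succAbove_zero, triA, Matrix.of_apply, Fin.val_succ]
        rw [show ((((Fin.succ (0:Fin (n+1)) : Fin (n+2))).succAbove j.succ : ℕ)) = (j:ℕ)+1+1 from by
          rw [hval1]; simp]
        split_ifs <;>
          first
            | rfl | omega
            | exact False.elim (by assumption)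
            | (congr 1 <;> omega)
            | (congr 1 <;> congr 1 <;> omega)
      rw [eB0, sub2, h0]
      simp
    rw [sub1, h1, e00, e01, hB]
    have p2 : Ssum (n+2) u = u 0 * Ssum (n+1) (fun i => u (i+1))
        + ∏ j ∈ range (n+2), u (j+1) := Ssum_peel (n+1) u
    have p1 : Ssum (n+1) (fun i => u (i+1)) = u 1 * Ssum n (fun i => u (i+1+1))
        + ∏ j ∈ range (n+1), u (j+1+1) := Ssum_peel n (fun i => u (i+1))
    have pq : (∏ j ∈ range (n+2), u (j+1)) = (∏ j ∈ range (n+1), u (j+1+1)) * u (0+1) :=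
      Finset.prod_range_succ' _ _
    simp only [Fin.val_succ, Fin.val_zero, pow_zero, pow_one]
    rw [p2, p1, pq]
    ring

private lemma cos_label (x : ℝ) (qk : ℕ) (hqk : qk ≤ 1) (m : ℤ) :
    Real.cos ((-1:ℝ)^qk * x + (qk:ℝ) * π + 2*π*(m:ℝ)) = (-1:ℝ)^qk * Real.cos x := by
  interval_cases qk
  · rw [show (-1:ℝ)^0 * x + (0:ℕ) * π + 2*π*(m:ℝ) = x + m * (2*π) by push_cast; ring]
    rw [Real.cos_add_int_mul_two_pi]
    norm_num
  · rw [show (-1:ℝ)^1 * x + (1:ℕ) * π + 2*π*(m:ℝ) = (π - x) + m * (2*π) by push_cast; ring]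
    rw [Real.cos_add_int_mul_two_pi, Real.cos_pi_sub]
    norm_num

private def rotIdx (N : ℕ) (h : 0 < N) : Fin N ≃ Fin N where
  toFun := fun j => ⟨((j:ℕ) + (N-1)) % N, Nat.mod_lt _ h⟩
  invFun := fun j => ⟨((j:ℕ) + 1) % N, Nat.mod_lt _ h⟩
  left_inv := fun j => Fin.ext (by
    simp only
    rw [Nat.mod_add_mod, show (j:ℕ) + (N-1) + 1 = (j:ℕ) + N by omega,
      Nat.add_mod_right, Nat.mod_eq_of_lt j.isLt])
  right_inv := fun j => Fin.ext (by
    simp only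
    rw [Nat.mod_add_mod, show (j:ℕ) + 1 + (N-1) = (j:ℕ) + N by omega,
      Nat.add_mod_right, Nat.mod_eq_of_lt j.isLt])

/-- at a stationary point labelled by `q_1, …, q_{N-1} ∈ {0,1}`
(i.e. `s_k ≡ (-1)^{q_k} s_N + q_k π (mod 2π)`), the Hessian determinant equals
`(cos s_N)^{N-1} (1 + Σ_{k=1}^{N-1} (-1)^{q_k}) Π_{j=1}^{N-1} (-1)^{q_j}`. -/
theorem stmt7 (N : ℕ) (hN : 3 ≤ N) (hodd : Odd N) (φ θ : Fin N → ℝ)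
    (hlast : θ (lastIdx N (by omega)) = 0)
    (hstat : IsStationaryPt N (by omega) φ θ)
    (q : Fin N → ℕ) (hq : ∀ k, q k ≤ 1) (hqlast : q (lastIdx N (by omega)) = 0)
    (hlabel : ∀ k : Fin N, (k : ℕ) < N - 1 →
      ∃ m : ℤ, sVar N (by omega) φ θ k =
        (-1 : ℝ) ^ (q k) * sVar N (by omega) φ θ (lastIdx N (by omega)) + (q k : ℝ) * π
          + 2 * π * m) :
    (hessAt N (by omega) φ θ).det =
      (Real.cos (sVar N (by omega) φ θ (lastIdx N (by omega)))) ^ (N - 1) *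
        (1 + ∑ k ∈ Finset.univ.erase (lastIdx N (by omega)), (-1 : ℝ) ^ (q k)) *
        ∏ j ∈ Finset.univ.erase (lastIdx N (by omega)), (-1 : ℝ) ^ (q j) := by
  have h : 0 < N := by omega
  have hN1 : N - 1 + 1 = N := by omega
  show (hessAt N h φ θ).det =
      (Real.cos (sVar N h φ θ (lastIdx N h))) ^ (N - 1) *
        (1 + ∑ k ∈ Finset.univ.erase (lastIdx N h), (-1 : ℝ) ^ (q k)) *
        ∏ j ∈ Finset.univ.erase (lastIdx N h), (-1 : ℝ) ^ (q j)
  set ε : Fin N → ℝ := fun k => (-1:ℝ)^(q k) with hε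
  set C : ℝ := Real.cos (sVar N h φ θ (lastIdx N h)) with hC
  -- cosine relation at the stationary point
  have hcos : ∀ k : Fin N, Real.cos (sVar N h φ θ k) = ε k * C := by
    intro k
    by_cases hk : (k:ℕ) < N - 1
    · obtain ⟨m, hm⟩ := hlabel k hk
      have hm' : sVar N h φ θ k =
          (-1:ℝ)^(q k) * sVar N h φ θ (lastIdx N h) + ((q k : ℕ):ℝ)*π + 2*π*(m:ℝ) := hm
      rw [hm', cos_label _ _ (hq k) m, hε, hC]
    · have hkl : k = lastIdx N h := Fin.ext (by
        have := k.isLt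
        simp only [lastIdx]
        omega)
      rw [hkl]
      have hq0 : q (lastIdx N h) = 0 := hqlast
      simp [hε, hq0, hC]
  set u : ℕ → ℝ := fun i => Real.cos (sVar N h φ θ ⟨(i + (N-1)) % N, Nat.mod_lt _ h⟩) with hu
  -- the Hessian is the tridiagonal matrix triA
  have hmat : hessAt N h φ θ = triA (N-1) u := by
    ext i j
    have hiN : (i:ℕ) < N := by have := i.isLt; omega
    have hvv : (⟨((i:ℕ)+1 + (N-1)) % N, Nat.mod_lt _ h⟩ : Fin N)
        = ⟨(i:ℕ), lt_of_lt_of_le i.isLt (Nat.sub_le N 1)⟩ := by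
      apply Fin.ext
      simp only
      rw [show (i:ℕ) + 1 + (N-1) = (i:ℕ) + N by omega, Nat.add_mod_right,
        Nat.mod_eq_of_lt hiN]
    simp only [hessAt, hessC, triA, Matrix.of_apply, hu, ← hvv]
    simp only [Fin.ext_iff]
    split_ifs <;> first | ring1 | omega | exact False.elim (by assumption) | (exfalso; omega)
  rw [hmat, triA_det]
  -- rewrite Ssum as a sum over Fin N of products with the original cosines
  have hqkey : Ssum (N-1) u = ∑ m : Fin N, ∏ j : Fin N,
      (if j = m then (1:ℝ) else Real.cos (sVar N h φ θ j)) := by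
    unfold Ssum
    rw [hN1]
    rw [← Equiv.sum_comp (rotIdx N h) (fun m => ∏ j : Fin N,
      (if j = m then (1:ℝ) else Real.cos (sVar N h φ θ j)))]
    rw [← Fin.sum_univ_eq_sum_range]
    apply Finset.sum_congr rfl
    intro k _
    rw [← Equiv.prod_comp (rotIdx N h) (fun j =>
      if j = rotIdx N h k then (1:ℝ) else Real.cos (sVar N h φ θ j))]
    rw [← Fin.prod_univ_eq_prod_range]
    apply Finset.prod_congr rfl
    intro j _
    have hcond : ((j:ℕ) = (k:ℕ)) = (rotIdx N h j = rotIdx N h k) := by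
      rw [Equiv.apply_eq_iff_eq, Fin.ext_iff]
    simp only [hcond, hu]
    rfl
  rw [hqkey]
  -- evaluate each product
  have hlastmem : (lastIdx N h) ∈ (Finset.univ : Finset (Fin N)) := Finset.mem_univ _
  have hlast1 : ε (lastIdx N h) = 1 := by
    have hq0 : q (lastIdx N h) = 0 := hqlast
    simp [hε, hq0]
  have hsq : ∀ x : Fin N, ε x * ε x = 1 := by
    intro x
    rw [hε]
    simp only
    rw [← pow_add]
    exact Even.neg_one_pow ⟨q x, by ring⟩
  have hproduniv : (∏ j : Fin N, ε j) = ∏ j ∈ Finset.univ.erase (lastIdx N h), ε j := by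
    rw [← Finset.mul_prod_erase _ _ hlastmem, hlast1, one_mul]
  have hfin : ∀ m : Fin N, (∏ j : Fin N,
      (if j = m then (1:ℝ) else Real.cos (sVar N h φ θ j)))
      = ((∏ j ∈ Finset.univ.erase (lastIdx N h), ε j) * ε m) * C^(N-1) := by
    intro m
    rw [← Finset.prod_erase_mul Finset.univ _ (Finset.mem_univ m), if_pos rfl, mul_one]
    have hstep : ∀ j ∈ Finset.univ.erase m,
        (if j = m then (1:ℝ) else Real.cos (sVar N h φ θ j)) = ε j * C := by
      intro j hj
      rw [if_neg (Finset.ne_of_mem_erase hj), hcos j]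
    rw [Finset.prod_congr rfl hstep, Finset.prod_mul_distrib, Finset.prod_const,
      Finset.card_erase_of_mem (Finset.mem_univ m), Finset.card_univ, Fintype.card_fin]
    congr 1
    have h1 : ε m * ∏ j ∈ Finset.univ.erase m, ε j = ∏ j : Fin N, ε j :=
      Finset.mul_prod_erase _ _ (Finset.mem_univ m)
    have h2 : (∏ j ∈ Finset.univ.erase m, ε j) = ε m * ∏ j : Fin N, ε j := by
      rw [← h1, ← mul_assoc, hsq m, one_mul]
    rw [h2, hproduniv]
    ring
  rw [Finset.sum_congr rfl (fun m _ => hfin m)]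
  rw [← Finset.sum_mul, ← Finset.mul_sum]
  have hsum : (∑ m : Fin N, ε m) = 1 + ∑ k ∈ Finset.univ.erase (lastIdx N h), ε k := by
    rw [← Finset.add_sum_erase _ _ hlastmem, hlast1]
  rw [hsum]
  ring
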